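/- Suppose t ≤ 5. Let K be a field and let x ∈ u_K(d). Then the centralizer C_{U_K(d)}(x) has a finite normal series each of whose successive quotients is isomorphic to the additive group (K, +). -/

import Mathlib

open Matrix

/-- The coordinate subspace of `K^n` spanned by the first `m` standard basis vectors. -/
def coordSub (K : Type*) [Field K] (n m : ℕ) : Submodule K (Fin n → K) where
  carrier := {v | ∀ j : Fin n, m ≤ (j : ℕ) → v j = 0}
  add_mem' := by intro a b ha hb j hj; simp [ha j hj, hb j hj]
  zero_mem' := by intro j hj; rfl
  smul_mem' := by intro c v hv j hj; simp [hv j hj]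

lemma coordSub_mono (K : Type*) [Field K] (n : ℕ) {m m' : ℕ} (h : m ≤ m') :
    coordSub K n m ≤ coordSub K n m' := fun v hv j hj => hv j (le_trans h hj)

lemma coordSub_zero (K : Type*) [Field K] (n : ℕ) {v : Fin n → K}
    (hv : v ∈ coordSub K n 0) : v = 0 := funext fun j => hv j (Nat.zero_le _)

/-- The parabolic subgroup of `GL n K` stabilizing the flag of coordinate subspaces
of dimensions `d 1 ≤ d 2 ≤ ... ≤ d t`. -/
def flagP (K : Type*) [Field K] (n t : ℕ) (d : ℕ → ℕ) : Subgroup (GL (Fin n) K) where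
  carrier := {g | ∀ i, 1 ≤ i → i ≤ t →
    Submodule.map (Matrix.mulVecLin (g : Matrix (Fin n) (Fin n) K)) (coordSub K n (d i))
      = coordSub K n (d i)}
  one_mem' := by
    intro i h1 h2
    simp
  mul_mem' := by
    intro a b ha hb i h1 h2
    have hab : ((↑(a * b) : Matrix (Fin n) (Fin n) K))
        = (↑a : Matrix (Fin n) (Fin n) K) * (↑b : Matrix (Fin n) (Fin n) K) := rfl
    rw [Set.mem_setOf_eq] at *
    rw [hab, Matrix.mulVecLin_mul, Submodule.map_comp, hb i h1 h2, ha i h1 h2]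
  inv_mem' := by
    intro a ha i h1 h2
    rw [Set.mem_setOf_eq] at *
    conv_lhs => rw [← ha i h1 h2]
    rw [← Submodule.map_comp, ← Matrix.mulVecLin_mul, Units.inv_mul, Matrix.mulVecLin_one,
      Submodule.map_id]

section flagU

variable {K : Type*} [Field K] {n t : ℕ} {d : ℕ → ℕ}

private lemma flagU_carrier_stab (h0 : d 0 = 0) (hd : Monotone d) {a : GL (Fin n) K}
    (ha : ∀ i, 1 ≤ i → i ≤ t → ∀ v ∈ coordSub K n (d i),
      ((a : Matrix (Fin n) (Fin n) K) - 1).mulVec v ∈ coordSub K n (d (i - 1)))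
    {i : ℕ} (hi : i ≤ t) {w : Fin n → K} (hw : w ∈ coordSub K n (d i)) :
    (a : Matrix (Fin n) (Fin n) K).mulVec w ∈ coordSub K n (d i) := by
  rcases Nat.eq_zero_or_pos i with h | h
  · subst h
    rw [h0] at hw
    rw [coordSub_zero K n hw, Matrix.mulVec_zero]
    exact Submodule.zero_mem _
  · have key : (a : Matrix (Fin n) (Fin n) K).mulVec w
        = ((a : Matrix (Fin n) (Fin n) K) - 1).mulVec w + w := by
      rw [Matrix.sub_mulVec, Matrix.one_mulVec, sub_add_cancel]
    rw [key]
    exact Submodule.add_mem _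
      (coordSub_mono K n (hd (Nat.sub_le i 1)) (ha i h hi w hw)) hw

private lemma flagU_carrier_inv_stab (h0 : d 0 = 0) (hd : Monotone d) {a : GL (Fin n) K}
    (ha : ∀ i, 1 ≤ i → i ≤ t → ∀ v ∈ coordSub K n (d i),
      ((a : Matrix (Fin n) (Fin n) K) - 1).mulVec v ∈ coordSub K n (d (i - 1)))
    {i : ℕ} (hi : i ≤ t) {w : Fin n → K} (hw : w ∈ coordSub K n (d i)) :
    ((a⁻¹ : GL (Fin n) K) : Matrix (Fin n) (Fin n) K).mulVec w ∈ coordSub K n (d i) := by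
  set f := Matrix.mulVecLin (a : Matrix (Fin n) (Fin n) K) with hf
  have hinj : Function.Injective f := by
    have : Function.LeftInverse
        (Matrix.mulVecLin ((a⁻¹ : GL (Fin n) K) : Matrix (Fin n) (Fin n) K)) f := by
      intro v
      simp only [hf, Matrix.mulVecLin_apply, Matrix.mulVec_mulVec, Units.inv_mul,
        Matrix.one_mulVec]
    exact this.injective
  have hle : Submodule.map f (coordSub K n (d i)) ≤ coordSub K n (d i) := by
    rintro y ⟨v, hv, rfl⟩
    exact flagU_carrier_stab h0 hd ha hi hv
  have heq : Submodule.map f (coordSub K n (d i)) = coordSub K n (d i) := by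
    apply Submodule.eq_of_le_of_finrank_le hle
    rw [LinearEquiv.finrank_eq (Submodule.equivMapOfInjective f hinj (coordSub K n (d i)))]
  rw [← heq] at hw
  rcases hw with ⟨v, hv, rfl⟩
  have : ((a⁻¹ : GL (Fin n) K) : Matrix (Fin n) (Fin n) K).mulVec (f v) = v := by
    simp only [hf, Matrix.mulVecLin_apply, Matrix.mulVec_mulVec, Units.inv_mul,
      Matrix.one_mulVec]
  rwa [this]

/-- The unipotent radical of the parabolic subgroup of `GL n K` stabilizing the flag of
coordinate subspaces of dimensions `d 1 ≤ ... ≤ d t`: all `u` with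
`(u - 1) V i ⊆ V (i-1)` for each `i`. -/
def flagU (K : Type*) [Field K] (n t : ℕ) (d : ℕ → ℕ) (h0 : d 0 = 0) (hd : Monotone d) :
    Subgroup (GL (Fin n) K) where
  carrier := {g | ∀ i, 1 ≤ i → i ≤ t → ∀ v ∈ coordSub K n (d i),
    ((g : Matrix (Fin n) (Fin n) K) - 1).mulVec v ∈ coordSub K n (d (i - 1))}
  one_mem' := by
    intro i h1 h2 v hv
    simp only [Units.val_one, sub_self, Matrix.zero_mulVec]
    exact Submodule.zero_mem _
  mul_mem' := by
    intro a b ha hb i h1 h2 v hv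
    rw [Set.mem_setOf_eq] at ha hb
    have hab : ((↑(a * b) : Matrix (Fin n) (Fin n) K))
        = (↑a : Matrix (Fin n) (Fin n) K) * (↑b : Matrix (Fin n) (Fin n) K) := rfl
    have key : ((↑(a * b) : Matrix (Fin n) (Fin n) K) - 1).mulVec v
        = (↑a : Matrix (Fin n) (Fin n) K).mulVec
            (((↑b : Matrix (Fin n) (Fin n) K) - 1).mulVec v)
          + ((↑a : Matrix (Fin n) (Fin n) K) - 1).mulVec v := by
      rw [hab, Matrix.mulVec_mulVec, ← Matrix.add_mulVec]
      congr 1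
      noncomm_ring
    rw [key]
    refine Submodule.add_mem _ ?_ (ha i h1 h2 v hv)
    exact flagU_carrier_stab h0 hd ha (le_trans (Nat.sub_le i 1) h2) (hb i h1 h2 v hv)
  inv_mem' := by
    intro a ha i h1 h2 v hv
    rw [Set.mem_setOf_eq] at ha
    have hmul : ((a⁻¹ : GL (Fin n) K) : Matrix (Fin n) (Fin n) K)
        * ((a : Matrix (Fin n) (Fin n) K) - 1)
        = 1 - ((a⁻¹ : GL (Fin n) K) : Matrix (Fin n) (Fin n) K) := by
      rw [mul_sub, Units.inv_mul, mul_one]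
    have key : (((a⁻¹ : GL (Fin n) K) : Matrix (Fin n) (Fin n) K) - 1).mulVec v
        = -((a⁻¹ : GL (Fin n) K) : Matrix (Fin n) (Fin n) K).mulVec
            (((a : Matrix (Fin n) (Fin n) K) - 1).mulVec v) := by
      rw [Matrix.mulVec_mulVec, hmul, Matrix.sub_mulVec, Matrix.sub_mulVec,
        Matrix.one_mulVec, neg_sub]
    rw [key]
    exact Submodule.neg_mem _
      (flagU_carrier_inv_stab h0 hd ha (le_trans (Nat.sub_le i 1) h2) (ha i h1 h2 v hv))

end flagU

section matCent

variable {K : Type*} [Field K] {n : ℕ}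

private lemma matCent_key (x : Matrix (Fin n) (Fin n) K) (g : GL (Fin n) K) :
    (↑g : Matrix (Fin n) (Fin n) K) * x * (↑g⁻¹ : Matrix (Fin n) (Fin n) K) = x
      ↔ (↑g : Matrix (Fin n) (Fin n) K) * x = x * (↑g : Matrix (Fin n) (Fin n) K) := by
  constructor
  · intro h
    have h2 : (↑g : Matrix (Fin n) (Fin n) K) * x * (↑g⁻¹ : Matrix (Fin n) (Fin n) K)
        * (↑g : Matrix (Fin n) (Fin n) K) = x * (↑g : Matrix (Fin n) (Fin n) K) := by rw [h]
    rwa [mul_assoc ((↑g : Matrix (Fin n) (Fin n) K) * x), Units.inv_mul, mul_one] at h2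
  · intro h
    rw [h, mul_assoc, Units.mul_inv, mul_one]

/-- The centralizer in `GL n K` of a matrix `x`: all `g` with `g * x * g⁻¹ = x`. -/
def matCent (K : Type*) [Field K] (n : ℕ) (x : Matrix (Fin n) (Fin n) K) :
    Subgroup (GL (Fin n) K) where
  carrier := {g | (↑g : Matrix (Fin n) (Fin n) K) * x * (↑g⁻¹ : Matrix (Fin n) (Fin n) K) = x}
  one_mem' := by
    simp
  mul_mem' := by
    intro a b ha hb
    simp only [Set.mem_setOf_eq, matCent_key] at ha hb ⊢
    have hab : ((↑(a * b) : Matrix (Fin n) (Fin n) K))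
        = (↑a : Matrix (Fin n) (Fin n) K) * (↑b : Matrix (Fin n) (Fin n) K) := rfl
    rw [hab, mul_assoc, hb, ← mul_assoc, ha, mul_assoc]
  inv_mem' := by
    intro a ha
    simp only [Set.mem_setOf_eq, matCent_key] at ha ⊢
    calc (↑a⁻¹ : Matrix (Fin n) (Fin n) K) * x
        = ↑a⁻¹ * x * ((↑a : Matrix (Fin n) (Fin n) K) * ↑a⁻¹) := by
          rw [Units.mul_inv, mul_one]
      _ = ↑a⁻¹ * (x * (↑a : Matrix (Fin n) (Fin n) K)) * ↑a⁻¹ := by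
          simp only [mul_assoc]
      _ = ↑a⁻¹ * ((↑a : Matrix (Fin n) (Fin n) K) * x) * ↑a⁻¹ := by rw [← ha]
      _ = x * ↑a⁻¹ := by rw [← mul_assoc, Units.inv_mul, one_mul]

end matCent

/-- The Lie algebra of the unipotent radical: matrices mapping each flag subspace `V i`
into `V (i-1)`. -/
def uSet (K : Type*) [Field K] (n t : ℕ) (d : ℕ → ℕ) : Set (Matrix (Fin n) (Fin n) K) :=
  {x | ∀ i, 1 ≤ i → i ≤ t → ∀ v ∈ coordSub K n (d i), x.mulVec v ∈ coordSub K n (d (i - 1))}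

/-- A group is split unipotent over the field `K` if it has a finite normal series each of
whose successive quotients is isomorphic to the additive group `(K, +)`. -/
def IsSplitUnipotentOver (K : Type*) [Field K] (G : Type*) [Group G] : Prop :=
  ∃ (k : ℕ) (s : Fin (k + 1) → Subgroup G), s 0 = ⊥ ∧ s (Fin.last k) = ⊤ ∧
    ∀ i : Fin k, s i.castSucc ≤ s i.succ ∧
      ∃ _ : ((s i.castSucc).subgroupOf (s i.succ)).Normal,
        Nonempty ((↥(s i.succ) ⧸ (s i.castSucc).subgroupOf (s i.succ)) ≃* Multiplicative K)

universe u



section plumb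

variable {K : Type*} [Field K]

lemma IsSplitUnipotentOver.of_subsingleton {G : Type*} [Group G] [Subsingleton G] :
    IsSplitUnipotentOver K G := by
  refine ⟨0, fun _ => ⊥, rfl, ?_, fun i => i.elim0⟩
  ext g
  simp [Subgroup.mem_bot, Subsingleton.elim g 1]

/-- transfer of quotient data along an injective hom -/
lemma mapPlumb {G G' : Type*} [Group G] [Group G'] (f : G →* G') (hf : Function.Injective f)
    {A B : Subgroup G} (hAB : A ≤ B) (hN : (A.subgroupOf B).Normal) :
    ∃ _ : ((A.map f).subgroupOf (B.map f)).Normal,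
      Nonempty ((↥(B.map f) ⧸ (A.map f).subgroupOf (B.map f)) ≃* (↥B ⧸ A.subgroupOf B)) := by
  set e := Subgroup.equivMapOfInjective B f hf with he
  have hmapeq : (A.subgroupOf B).map (e : ↥B →* ↥(B.map f)) = (A.map f).subgroupOf (B.map f) := by
    ext y
    simp only [Subgroup.mem_map, Subgroup.mem_subgroupOf]
    constructor
    · rintro ⟨b, hb, rfl⟩
      exact ⟨(b : G), hb, rfl⟩
    · rintro ⟨a, ha, hay⟩
      refine ⟨⟨a, hAB ha⟩, ha, ?_⟩
      exact Subtype.ext hay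
  have hN' : ((A.map f).subgroupOf (B.map f)).Normal := by
    rw [← hmapeq]
    exact hN.map _ e.surjective
  exact ⟨hN', ⟨(QuotientGroup.congr _ _ e hmapeq).symm⟩⟩

lemma IsSplitUnipotentOver.transfer {G G' : Type*} [Group G] [Group G'] (e : G ≃* G')
    (h : IsSplitUnipotentOver K G) : IsSplitUnipotentOver K G' := by
  obtain ⟨k, s, h0, hl, hstep⟩ := h
  refine ⟨k, fun i => (s i).map (e : G →* G'), ?_, ?_, ?_⟩
  · dsimp only; rw [h0, Subgroup.map_bot]
  · dsimp only; rw [hl, Subgroup.map_top_of_surjective _ e.surjective]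
  · intro i
    dsimp only
    obtain ⟨hle, hn, ⟨q⟩⟩ := hstep i
    refine ⟨Subgroup.map_mono hle, ?_⟩
    obtain ⟨hn', ⟨q'⟩⟩ := mapPlumb (e : G →* G') e.injective hle hn
    exact ⟨hn', ⟨q'.trans q⟩⟩

lemma ker_subgroupOf_top {G : Type*} [Group G] (N : Subgroup G) [hN : N.Normal] :
    (N.subgroupOf (⊤ : Subgroup G)).Normal := by
  constructor
  rintro ⟨a, _⟩ ha ⟨g, _⟩
  simp only [Subgroup.mem_subgroupOf] at ha ⊢
  exact hN.conj_mem a ha g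

lemma extendSU {G : Type*} [Group G] (ψ : G →* Multiplicative K)
    (hsurj : Function.Surjective ψ) (h : IsSplitUnipotentOver K ↥ψ.ker) :
    IsSplitUnipotentOver K G := by
  obtain ⟨k, s, h0, hl, hstep⟩ := h
  refine ⟨k + 1, fun j => if h : (j : ℕ) < k + 1 then (s ⟨j, h⟩).map ψ.ker.subtype else ⊤,
    ?_, ?_, ?_⟩
  · dsimp only
    have hp : ((0 : Fin (k+2)) : ℕ) < k + 1 := by simp
    rw [dif_pos hp]
    have : (⟨((0 : Fin (k+2)) : ℕ), hp⟩ : Fin (k+1)) = 0 := rfl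
    rw [this, h0, Subgroup.map_bot]
  · dsimp only
    have hnl : ¬ ((Fin.last (k+1) : ℕ) < k + 1) := by simp
    rw [dif_neg hnl]
  · intro i
    dsimp only
    have hci : ((i.castSucc : Fin (k+2)) : ℕ) = (i : ℕ) := rfl
    have hsi : ((i.succ : Fin (k+2)) : ℕ) = (i : ℕ) + 1 := rfl
    have hp1 : ((i.castSucc : Fin (k+2)) : ℕ) < k + 1 := by rw [hci]; exact i.isLt
    beta_reduce
    rw [dif_pos hp1]
    by_cases hik : (i : ℕ) < k
    · have hp2 : ((i.succ : Fin (k+2)) : ℕ) < k + 1 := by rw [hsi]; omega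
      rw [dif_pos hp2]
      set j : Fin k := ⟨(i : ℕ), hik⟩ with hj
      have e1 : (⟨((i.castSucc : Fin (k+2)) : ℕ), hp1⟩ : Fin (k+1)) = j.castSucc := rfl
      have e2 : (⟨((i.succ : Fin (k+2)) : ℕ), hp2⟩ : Fin (k+1)) = j.succ := rfl
      rw [e1, e2]
      obtain ⟨hle, hn, ⟨q⟩⟩ := hstep j
      refine ⟨Subgroup.map_mono hle, ?_⟩
      obtain ⟨hn', ⟨q'⟩⟩ := mapPlumb ψ.ker.subtype ψ.ker.subtype_injective hle hn
      exact ⟨hn', ⟨q'.trans q⟩⟩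
    · have hp2 : ¬ ((i.succ : Fin (k+2)) : ℕ) < k + 1 := by rw [hsi]; omega
      rw [dif_neg hp2]
      have e1 : (⟨((i.castSucc : Fin (k+2)) : ℕ), hp1⟩ : Fin (k+1)) = Fin.last k := by
        ext
        simp only [hci, Fin.val_last]
        omega
      rw [e1, hl]
      have hNmap : (⊤ : Subgroup ↥ψ.ker).map ψ.ker.subtype = ψ.ker := by
        rw [← MonoidHom.range_eq_map, Subgroup.range_subtype]
      rw [hNmap]
      refine ⟨le_top, ?_⟩
      have hnorm : (ψ.ker.subgroupOf (⊤ : Subgroup G)).Normal := ker_subgroupOf_top ψ.ker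
      refine ⟨hnorm, ?_⟩
      have hmapeq : (ψ.ker.subgroupOf (⊤ : Subgroup G)).map
          (Subgroup.topEquiv : ↥(⊤ : Subgroup G) ≃* G).toMonoidHom = ψ.ker := by
        ext y
        simp only [Subgroup.mem_map, Subgroup.mem_subgroupOf]
        constructor
        · rintro ⟨b, hb, rfl⟩; exact hb
        · intro hy; exact ⟨⟨y, trivial⟩, hy, rfl⟩
      have q1 := QuotientGroup.congr (ψ.ker.subgroupOf (⊤ : Subgroup G)) ψ.ker
        Subgroup.topEquiv hmapeq
      exact ⟨q1.trans (QuotientGroup.quotientKerEquivOfSurjective ψ hsurj)⟩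

end plumb
section ind

universe v w

variable {K : Type*} [Field K]

lemma indStepSU : ∀ (m : ℕ) (V : Type v) (_ : AddCommGroup V), ∀ (_ : @Module K V _ _),
    ∀ (_ : @FiniteDimensional K V _ _ _) (_ : @Module.finrank K V _ _ _ = m)
    (G : Type w) (_ : Group G) (φ : G →* Multiplicative V),
    Function.Surjective φ → IsSplitUnipotentOver K ↥φ.ker → IsSplitUnipotentOver K G := by
  intro m
  induction m with
  | zero =>
    intro V _ _ _ hm G _ φ hsurj hker
    have hVsub : Subsingleton V := by
      rw [← Module.finrank_zero_iff (R := K)]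
      exact hm
    have hkertop : φ.ker = ⊤ := by
      ext g
      simp only [MonoidHom.mem_ker, Subgroup.mem_top, iff_true]
      exact Subsingleton.elim _ _
    rw [hkertop] at hker
    exact hker.transfer Subgroup.topEquiv
  | succ m ih =>
    intro V _ _ _ hm G _ φ hsurj hker
    -- pick a coordinate functional
    let b : Module.Basis (Fin (m + 1)) K V := Module.finBasisOfFinrankEq K V hm
    let π : V →ₗ[K] K := b.coord (Fin.last m)
    have hπs : Function.Surjective π := by
      intro c
      refine ⟨c • b (Fin.last m), ?_⟩
      simp [π, Module.Basis.coord_apply]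
    let ψ : G →* Multiplicative K :=
      (AddMonoidHom.toMultiplicative π.toAddMonoidHom).comp φ
    have hψs : Function.Surjective ψ := by
      intro c
      obtain ⟨v, hv⟩ := hsurj (Multiplicative.ofAdd (hπs c.toAdd).choose)
      refine ⟨v, ?_⟩
      simp only [ψ, MonoidHom.comp_apply, hv]
      exact Multiplicative.toAdd.injective ((hπs c.toAdd).choose_spec)
    -- the restricted map to ker π
    have hmem : ∀ g : ↥ψ.ker, (φ (g : G)).toAdd ∈ LinearMap.ker π := by
      rintro ⟨g, hg⟩
      simp only [MonoidHom.mem_ker, ψ, MonoidHom.comp_apply] at hg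
      have := congrArg Multiplicative.toAdd hg
      simpa using this
    let φ' : ↥ψ.ker →* Multiplicative ↥(LinearMap.ker π) :=
      MonoidHom.mk' (fun g => Multiplicative.ofAdd ⟨(φ (g : G)).toAdd, hmem g⟩)
        (by
          intro g h
          apply Multiplicative.toAdd.injective
          apply Subtype.ext
          simp [_root_.map_mul])
    have hφ's : Function.Surjective φ' := by
      rintro ⟨w, hw⟩
      obtain ⟨g, hg⟩ := hsurj (Multiplicative.ofAdd w)
      have hgker : g ∈ ψ.ker := by
        simp only [MonoidHom.mem_ker, ψ, MonoidHom.comp_apply, hg]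
        apply Multiplicative.toAdd.injective
        simpa using hw
      refine ⟨⟨g, hgker⟩, ?_⟩
      apply Multiplicative.toAdd.injective
      apply Subtype.ext
      simp only [φ', MonoidHom.mk'_apply, toAdd_ofAdd, hg]
      rfl
    have hkereq : φ'.ker = φ.ker.subgroupOf ψ.ker := by
      ext g
      simp only [MonoidHom.mem_ker, Subgroup.mem_subgroupOf, φ']
      constructor
      · intro h
        have h2 := congrArg (fun z => (Multiplicative.toAdd z : ↥(LinearMap.ker π)).1) h
        simp only [MonoidHom.mk'_apply] at h2
        apply Multiplicative.toAdd.injective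
        simpa using h2
      · intro h
        apply Multiplicative.toAdd.injective
        apply Subtype.ext
        simp [h]
    have hle : φ.ker ≤ ψ.ker := by
      intro g hg
      simp only [MonoidHom.mem_ker] at hg ⊢
      simp [ψ, hg]
    have hker' : IsSplitUnipotentOver K ↥φ'.ker := by
      rw [hkereq]
      exact hker.transfer (Subgroup.subgroupOfEquivOfLe hle).symm
    have hrank : Module.finrank K ↥(LinearMap.ker π) = m := by
      have h1 := LinearMap.finrank_range_add_finrank_ker π
      rw [LinearMap.range_eq_top.mpr hπs, finrank_top, Module.finrank_self, hm] at h1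
      omega
    have := ih ↥(LinearMap.ker π) _ _ inferInstance hrank ↥ψ.ker _ φ' hφ's hker'
    exact extendSU ψ hψs this

end ind
section conc

variable {K : Type*} [Field K] {n t : ℕ} {d : ℕ → ℕ}

/-- The `k`-th piece of the filtration of the Lie algebra of the unipotent radical. -/
def uMod (K : Type*) [Field K] (n t : ℕ) (d : ℕ → ℕ) (k : ℕ) :
    Submodule K (Matrix (Fin n) (Fin n) K) where
  carrier := {y | ∀ i, i ≤ t → ∀ v ∈ coordSub K n (d i), y.mulVec v ∈ coordSub K n (d (i - k))}
  add_mem' := by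
    intro a b ha hb i hi v hv
    rw [Matrix.add_mulVec]
    exact Submodule.add_mem _ (ha i hi v hv) (hb i hi v hv)
  zero_mem' := by
    intro i hi v hv
    rw [Matrix.zero_mulVec]
    exact Submodule.zero_mem _
  smul_mem' := by
    intro c y hy i hi v hv
    rw [Matrix.smul_mulVec]
    exact Submodule.smul_mem _ c (hy i hi v hv)

/-- The centralizer of `x` in the matrix algebra, as a submodule. -/
def cMod (K : Type*) [Field K] (n : ℕ) (x : Matrix (Fin n) (Fin n) K) :
    Submodule K (Matrix (Fin n) (Fin n) K) where
  carrier := {y | y * x = x * y}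
  add_mem' := by
    intro a b ha hb
    simp only [Set.mem_setOf_eq] at *
    rw [add_mul, mul_add, ha, hb]
  zero_mem' := by simp
  smul_mem' := by
    intro c y hy
    simp only [Set.mem_setOf_eq] at *
    rw [smul_mul_assoc, mul_smul_comm, hy]

lemma uMod_stab (hd : Monotone d) {k : ℕ} {a : Matrix (Fin n) (Fin n) K}
    (ha : a - 1 ∈ uMod K n t d k) {i : ℕ} (hi : i ≤ t) {v : Fin n → K}
    (hv : v ∈ coordSub K n (d i)) : a.mulVec v ∈ coordSub K n (d i) := by
  have key : a.mulVec v = (a - 1).mulVec v + v := by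
    rw [Matrix.sub_mulVec, Matrix.one_mulVec, sub_add_cancel]
  rw [key]
  exact Submodule.add_mem _ (coordSub_mono K n (hd (Nat.sub_le i k)) (ha i hi v hv)) hv

lemma uMod_inv_stab (hd : Monotone d) {k : ℕ} {a : GL (Fin n) K}
    (ha : (a : Matrix (Fin n) (Fin n) K) - 1 ∈ uMod K n t d k) {i : ℕ} (hi : i ≤ t)
    {v : Fin n → K} (hv : v ∈ coordSub K n (d i)) :
    ((a⁻¹ : GL (Fin n) K) : Matrix (Fin n) (Fin n) K).mulVec v ∈ coordSub K n (d i) := by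
  set f := Matrix.mulVecLin (a : Matrix (Fin n) (Fin n) K) with hf
  have hinj : Function.Injective f := by
    have : Function.LeftInverse
        (Matrix.mulVecLin ((a⁻¹ : GL (Fin n) K) : Matrix (Fin n) (Fin n) K)) f := by
      intro w
      simp only [hf, Matrix.mulVecLin_apply, Matrix.mulVec_mulVec, Units.inv_mul,
        Matrix.one_mulVec]
    exact this.injective
  have hle : Submodule.map f (coordSub K n (d i)) ≤ coordSub K n (d i) := by
    rintro y ⟨w, hw, rfl⟩
    exact uMod_stab hd ha hi hw
  have heq : Submodule.map f (coordSub K n (d i)) = coordSub K n (d i) := by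
    apply Submodule.eq_of_le_of_finrank_le hle
    rw [LinearEquiv.finrank_eq (Submodule.equivMapOfInjective f hinj (coordSub K n (d i)))]
  rw [← heq] at hv
  rcases hv with ⟨w, hw, rfl⟩
  have : ((a⁻¹ : GL (Fin n) K) : Matrix (Fin n) (Fin n) K).mulVec (f w) = w := by
    simp only [hf, Matrix.mulVecLin_apply, Matrix.mulVec_mulVec, Units.inv_mul,
      Matrix.one_mulVec]
  rwa [this]

/-- The subgroup of elements of the centralizer of `x` congruent to `1` to depth `k`. -/
def Hfil (K : Type*) [Field K] (n t : ℕ) (d : ℕ → ℕ) (hd : Monotone d)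
    (x : Matrix (Fin n) (Fin n) K) (k : ℕ) : Subgroup (GL (Fin n) K) where
  carrier := {g | ((g : Matrix (Fin n) (Fin n) K) - 1) ∈ uMod K n t d k ∧
    (g : Matrix (Fin n) (Fin n) K) * x = x * (g : Matrix (Fin n) (Fin n) K)}
  one_mem' := by
    constructor
    · simp only [Units.val_one, sub_self]
      exact Submodule.zero_mem _
    · simp
  mul_mem' := by
    rintro a b ⟨ha1, ha2⟩ ⟨hb1, hb2⟩
    have hab : ((↑(a * b) : Matrix (Fin n) (Fin n) K))
        = (↑a : Matrix (Fin n) (Fin n) K) * (↑b : Matrix (Fin n) (Fin n) K) := rfl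
    constructor
    · intro i hi v hv
      have key : ((↑(a * b) : Matrix (Fin n) (Fin n) K) - 1).mulVec v
          = (↑a : Matrix (Fin n) (Fin n) K).mulVec
              (((↑b : Matrix (Fin n) (Fin n) K) - 1).mulVec v)
            + ((↑a : Matrix (Fin n) (Fin n) K) - 1).mulVec v := by
        rw [hab, Matrix.mulVec_mulVec, ← Matrix.add_mulVec]
        congr 1
        noncomm_ring
      rw [key]
      exact Submodule.add_mem _
        (uMod_stab hd ha1 (le_trans (Nat.sub_le i k) hi) (hb1 i hi v hv))
        (ha1 i hi v hv)
    · rw [hab, mul_assoc, hb2, ← mul_assoc, ha2, mul_assoc]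
  inv_mem' := by
    rintro a ⟨ha1, ha2⟩
    constructor
    · intro i hi v hv
      have hmul : ((a⁻¹ : GL (Fin n) K) : Matrix (Fin n) (Fin n) K)
          * ((a : Matrix (Fin n) (Fin n) K) - 1)
          = 1 - ((a⁻¹ : GL (Fin n) K) : Matrix (Fin n) (Fin n) K) := by
        rw [mul_sub, Units.inv_mul, mul_one]
      have key : (((a⁻¹ : GL (Fin n) K) : Matrix (Fin n) (Fin n) K) - 1).mulVec v
          = -((a⁻¹ : GL (Fin n) K) : Matrix (Fin n) (Fin n) K).mulVec
              (((a : Matrix (Fin n) (Fin n) K) - 1).mulVec v) := by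
        rw [Matrix.mulVec_mulVec, hmul, Matrix.sub_mulVec, Matrix.sub_mulVec,
          Matrix.one_mulVec, neg_sub]
      rw [key]
      exact Submodule.neg_mem _
        (uMod_inv_stab hd ha1 (le_trans (Nat.sub_le i k) hi) (ha1 i hi v hv))
    · calc ((a⁻¹ : GL (Fin n) K) : Matrix (Fin n) (Fin n) K) * x
          = ↑a⁻¹ * x * ((↑a : Matrix (Fin n) (Fin n) K) * ↑a⁻¹) := by
            rw [Units.mul_inv, mul_one]
        _ = ↑a⁻¹ * (x * (↑a : Matrix (Fin n) (Fin n) K)) * ↑a⁻¹ := by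
            simp only [mul_assoc]
        _ = ↑a⁻¹ * ((↑a : Matrix (Fin n) (Fin n) K) * x) * ↑a⁻¹ := by rw [ha2]
        _ = x * ↑a⁻¹ := by rw [← mul_assoc, Units.inv_mul, one_mul]

lemma mem_Hfil {hd : Monotone d} {x : Matrix (Fin n) (Fin n) K} {k : ℕ} {g : GL (Fin n) K} :
    g ∈ Hfil K n t d hd x k ↔ ((g : Matrix (Fin n) (Fin n) K) - 1) ∈ uMod K n t d k ∧
      (g : Matrix (Fin n) (Fin n) K) * x = x * (g : Matrix (Fin n) (Fin n) K) := Iff.rfl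

lemma coordSub_top (h : d t = n) : coordSub K n (d t) = ⊤ := by
  rw [h]
  ext v
  simp only [Submodule.mem_top, iff_true]
  intro j hj
  exact absurd j.isLt (by omega)

lemma uMod_nilpotent (hd : Monotone d) (h0 : d 0 = 0) (hdt : d t = n) {k : ℕ} (hk : 1 ≤ k)
    {y : Matrix (Fin n) (Fin n) K} (hy : y ∈ uMod K n t d k) : y ^ t = 0 := by
  have claim : ∀ m, ∀ i ≤ t, ∀ v ∈ coordSub K n (d i),
      (y ^ m).mulVec v ∈ coordSub K n (d (i - m)) := by
    intro m
    induction m with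
    | zero =>
      intro i hi v hv
      simpa [Matrix.one_mulVec] using hv
    | succ m ih =>
      intro i hi v hv
      rw [pow_succ', ← Matrix.mulVec_mulVec]
      have h1 := hy (i - m) (le_trans (Nat.sub_le i m) hi) _ (ih i hi v hv)
      refine coordSub_mono K n (hd ?_) h1
      omega
  have hz : ∀ v, (y ^ t).mulVec v = 0 := by
    intro v
    have hv : v ∈ coordSub K n (d t) := by rw [coordSub_top hdt]; trivial
    have := claim t t le_rfl v hv
    rw [Nat.sub_self, h0] at this
    exact coordSub_zero K n this
  ext i j
  have := congrFun (hz (Pi.single j 1)) i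
  simpa using this

end conc
section step

variable {K : Type*} [Field K] {n t : ℕ} {d : ℕ → ℕ}

set_option maxHeartbeats 1000000 in
set_option synthInstance.maxHeartbeats 400000 in
lemma stepSU (hd : Monotone d) (h0 : d 0 = 0) (hdt : d t = n)
    (x : Matrix (Fin n) (Fin n) K) {k : ℕ} (hk : 1 ≤ k)
    (hnext : IsSplitUnipotentOver K ↥(Hfil K n t d hd x (k+1))) :
    IsSplitUnipotentOver K ↥(Hfil K n t d hd x k) := by
  set Z : Submodule K (Matrix (Fin n) (Fin n) K) := uMod K n t d k ⊓ cMod K n x with hZ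
  set W : Submodule K ↥Z := (uMod K n t d (k + 1)).comap Z.subtype with hW
  have hmemZ : ∀ g : ↥(Hfil K n t d hd x k),
      ((g : GL (Fin n) K) : Matrix (Fin n) (Fin n) K) - 1 ∈ Z := by
    intro g
    refine ⟨g.2.1, ?_⟩
    have h2 := g.2.2
    show (((g : GL (Fin n) K) : Matrix (Fin n) (Fin n) K) - 1) * x
        = x * (((g : GL (Fin n) K) : Matrix (Fin n) (Fin n) K) - 1)
    rw [sub_mul, mul_sub, h2, one_mul, mul_one]
  let f : ↥(Hfil K n t d hd x k) → Multiplicative (↥Z ⧸ W) :=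
    fun g => Multiplicative.ofAdd (Submodule.Quotient.mk ⟨_, hmemZ g⟩)
  have hfmul : ∀ g h : ↥(Hfil K n t d hd x k), f (g * h) = f g * f h := by
    intro g h
    apply Multiplicative.toAdd.injective
    simp only [f, toAdd_mul, toAdd_ofAdd]
    rw [← Submodule.Quotient.mk_add, Submodule.Quotient.eq]
    show Z.subtype _ ∈ uMod K n t d (k + 1)
    rw [Submodule.subtype_apply]
    have hcoe : ((⟨_, hmemZ (g * h)⟩ - (⟨_, hmemZ g⟩ + ⟨_, hmemZ h⟩) : ↥Z) :
        Matrix (Fin n) (Fin n) K)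
        = (((g : GL (Fin n) K) : Matrix (Fin n) (Fin n) K) - 1)
          * (((h : GL (Fin n) K) : Matrix (Fin n) (Fin n) K) - 1) := by
      push_cast
      noncomm_ring
    rw [hcoe]
    intro i hi v hv
    rw [← Matrix.mulVec_mulVec]
    have h1 := h.2.1 i hi v hv
    have h2 := g.2.1 (i - k) (le_trans (Nat.sub_le i k) hi) _ h1
    refine coordSub_mono K n (hd ?_) h2
    omega
  let φ : ↥(Hfil K n t d hd x k) →* Multiplicative (↥Z ⧸ W) := MonoidHom.mk' f hfmul
  have hphi : ∀ g, φ g = Multiplicative.ofAdd (Submodule.Quotient.mk ⟨_, hmemZ g⟩) :=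
    fun g => rfl
  have hle : Hfil K n t d hd x (k + 1) ≤ Hfil K n t d hd x k := by
    rintro g ⟨hg1, hg2⟩
    refine ⟨?_, hg2⟩
    intro i hi v hv
    exact coordSub_mono K n (hd (Nat.sub_le_sub_left (Nat.le_succ k) i)) (hg1 i hi v hv)
  have hkereq : φ.ker = (Hfil K n t d hd x (k + 1)).subgroupOf (Hfil K n t d hd x k) := by
    ext g
    simp only [MonoidHom.mem_ker, Subgroup.mem_subgroupOf, mem_Hfil]
    rw [hphi, ofAdd_eq_one, Submodule.Quotient.mk_eq_zero]
    show (_ ∈ uMod K n t d (k + 1)) ↔ _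
    exact ⟨fun hg => ⟨hg, g.2.2⟩, fun hg => hg.1⟩
  have hsurj : Function.Surjective φ := by
    intro w
    obtain ⟨z, hz⟩ := Submodule.Quotient.mk_surjective W (Multiplicative.toAdd w)
    have hznil : (z : Matrix (Fin n) (Fin n) K) ^ t = 0 :=
      uMod_nilpotent hd h0 hdt hk z.2.1
    have hunit : IsUnit (1 + (z : Matrix (Fin n) (Fin n) K)) :=
      IsNilpotent.isUnit_one_add ⟨t, hznil⟩
    have hspec : (hunit.unit : Matrix (Fin n) (Fin n) K)
        = 1 + (z : Matrix (Fin n) (Fin n) K) := hunit.unit_spec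
    have hmem : (hunit.unit : GL (Fin n) K) ∈ Hfil K n t d hd x k := by
      have hsub : (hunit.unit : Matrix (Fin n) (Fin n) K) - 1
          = (z : Matrix (Fin n) (Fin n) K) := by
        rw [hspec, add_sub_cancel_left]
      constructor
      · rw [hsub]; exact z.2.1
      · rw [hspec, add_mul, mul_add, one_mul, mul_one, z.2.2]
    refine ⟨⟨hunit.unit, hmem⟩, ?_⟩
    have hsubeq : (⟨_, hmemZ ⟨hunit.unit, hmem⟩⟩ : ↥Z) = z := by
      apply Subtype.ext
      show (hunit.unit : Matrix (Fin n) (Fin n) K) - 1 = (z : Matrix (Fin n) (Fin n) K)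
      rw [hspec, add_sub_cancel_left]
    rw [hphi, hsubeq, hz]
    exact ofAdd_toAdd w
  have hker : IsSplitUnipotentOver K ↥φ.ker := by
    rw [hkereq]
    exact hnext.transfer (Subgroup.subgroupOfEquivOfLe hle).symm
  exact indStepSU (Module.finrank K (↥Z ⧸ W)) (↥Z ⧸ W) _ _ inferInstance rfl _ _ φ hsurj hker

end step
section fin

variable {K : Type*} [Field K] {n t : ℕ} {d : ℕ → ℕ}

lemma Hfil_top_eq_bot (hd : Monotone d) (h0 : d 0 = 0) (hdt : d t = n)
    (x : Matrix (Fin n) (Fin n) K) : Hfil K n t d hd x t = ⊥ := by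
  ext g
  simp only [Subgroup.mem_bot, mem_Hfil]
  constructor
  · rintro ⟨hg1, _⟩
    have hzero : ((g : Matrix (Fin n) (Fin n) K) - 1) = 0 := by
      ext i j
      have hv : (Pi.single j 1 : Fin n → K) ∈ coordSub K n (d t) := by
        rw [coordSub_top hdt]; trivial
      have := hg1 t le_rfl _ hv
      rw [Nat.sub_self, h0] at this
      have h2 := congrFun (coordSub_zero K n this) i
      simpa using h2
    apply Units.ext
    have := sub_eq_zero.mp hzero
    simpa using this
  · rintro rfl
    refine ⟨?_, by simp⟩
    simp only [Units.val_one, sub_self]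
    exact Submodule.zero_mem _
lemma Hfil_one_eq (hd : Monotone d) (h0 : d 0 = 0) (x : Matrix (Fin n) (Fin n) K) :
    Hfil K n t d hd x 1 = flagU K n t d h0 hd ⊓ matCent K n x := by
  ext g
  simp only [Subgroup.mem_inf, mem_Hfil]
  constructor
  · rintro ⟨hg1, hg2⟩
    constructor
    · intro i h1 h2 v hv
      exact hg1 i h2 v hv
    · show (g : Matrix (Fin n) (Fin n) K) * x * ((g⁻¹ : GL (Fin n) K) :
        Matrix (Fin n) (Fin n) K) = x
      rw [hg2, mul_assoc, Units.mul_inv, mul_one]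
  · rintro ⟨hg1, hg2⟩
    constructor
    · intro i hi v hv
      rcases Nat.eq_zero_or_pos i with h | h
      · subst h
        rw [h0] at hv
        rw [coordSub_zero K n hv, Matrix.mulVec_zero]
        exact Submodule.zero_mem _
      · exact hg1 i h hi v hv
    · exact (matCent_key x g).mp hg2

lemma Hfil_down (hd : Monotone d) (h0 : d 0 = 0) (hdt : d t = n)
    (x : Matrix (Fin n) (Fin n) K) :
    ∀ m k, 1 ≤ k → k + m = t → IsSplitUnipotentOver K ↥(Hfil K n t d hd x k) := by
  intro m
  induction m with
  | zero =>
    intro k hk hkt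
    have : k = t := by omega
    subst this
    rw [Hfil_top_eq_bot hd h0 hdt x]
    haveI : Subsingleton ↥(⊥ : Subgroup (GL (Fin n) K)) :=
      ⟨fun a b => Subtype.ext (by rw [Subgroup.mem_bot.mp a.2, Subgroup.mem_bot.mp b.2])⟩
    exact IsSplitUnipotentOver.of_subsingleton
  | succ m ih =>
    intro k hk hkt
    exact stepSU hd h0 hdt x hk (ih (k + 1) (by omega) (by omega))

end fin

/-- The centralizer `C_U(x)` is a split unipotent group over `K`. -/
theorem stmt5 (n t : ℕ) (hn : 1 ≤ n) (ht1 : 1 ≤ t) (ht : t ≤ 5)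
    (d : ℕ → ℕ) (hd : Monotone d) (h0 : d 0 = 0) (hdt : d t = n)
    (K : Type u) [Field K] (x : Matrix (Fin n) (Fin n) K) (hx : x ∈ uSet K n t d) :
    IsSplitUnipotentOver K ↥(flagU K n t d h0 hd ⊓ matCent K n x) := by
  rw [← Hfil_one_eq hd h0 x]
  exact Hfil_down hd h0 hdt x (t - 1) 1 le_rfl (by omega)
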